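/- Let Y be the one-point Lindelöfication of an uncountable discrete space D. Then player 2 has a winning strategy in the Menger game G_fin(𝓞,𝓞) played on Y. -/

import Mathlib

open Set

/-- A space is Menger if for every sequence of open covers one can choose finite
subfamilies whose union is a cover. -/
def Menger (X : Type*) [TopologicalSpace X] : Prop :=
  ∀ U : ℕ → Set (Set X),
    (∀ n, (∀ s ∈ U n, IsOpen s) ∧ ⋃₀ U n = Set.univ) →
    ∃ V : ℕ → Set (Set X),
      (∀ n, V n ⊆ U n ∧ (V n).Finite) ∧ ⋃₀ (⋃ n, V n) = Set.univ

/-- A family of open sets is an almost covering if the complement of its union is compact. -/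
def AlmostCover {X : Type*} [TopologicalSpace X] (U : Set (Set X)) : Prop :=
  (∀ s ∈ U, IsOpen s) ∧ IsCompact (⋃₀ U)ᶜ

/-- The selection principle `S_fin(𝓐,𝓐)` for almost coverings. -/
def SfinAA (X : Type*) [TopologicalSpace X] : Prop :=
  ∀ U : ℕ → Set (Set X), (∀ n, AlmostCover (U n)) →
    ∃ V : ℕ → Set (Set X),
      (∀ n, V n ⊆ U n ∧ (V n).Finite) ∧ IsCompact (⋃₀ (⋃ n, V n))ᶜ

/-- A sequence of sets is a closed net at `K` if each member is closed and contains `K`,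
and every open neighborhood of `K` contains some member. -/
def ClosedNetSeqAt {X : Type*} [TopologicalSpace X] (F : ℕ → Set X) (K : Set X) : Prop :=
  (∀ n, IsClosed (F n) ∧ K ⊆ F n) ∧
    ∀ A : Set X, IsOpen A → K ⊆ A → ∃ n, F n ⊆ A

/-- A decreasing closed net at `K`. -/
def DecClosedNetSeqAt {X : Type*} [TopologicalSpace X] (F : ℕ → Set X) (K : Set X) : Prop :=
  (∀ n, F (n + 1) ⊆ F n) ∧ ClosedNetSeqAt F K

/-- A compact set `Q` has a countable (outer) neighborhood base in `X`. -/
def HasCountableOuterBase {X : Type*} [TopologicalSpace X] (Q : Set X) : Prop :=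
  ∃ B : ℕ → Set X, (∀ k, IsOpen (B k) ∧ Q ⊆ B k) ∧
    ∀ A : Set X, IsOpen A → Q ⊆ A → ∃ k, B k ⊆ A

/-- `X` is of countable type: every compact set is contained in a compact set having a
countable neighborhood base in `X`. -/
def CountableType (X : Type*) [TopologicalSpace X] : Prop :=
  ∀ K : Set X, IsCompact K → ∃ Q : Set X, IsCompact Q ∧ K ⊆ Q ∧ HasCountableOuterBase Q

/-- The remainder `βX \ X` of the Stone–Čech compactification. -/
abbrev StoneCechRemainder (X : Type*) [TopologicalSpace X] : Set (StoneCech X) :=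
  (Set.range (stoneCechUnit : X → StoneCech X))ᶜ


/-- The one-point Lindelofication of `D`: the extra point is `none`,
points of `D` are isolated, and neighborhoods of `none` are co-countable. -/
def Lind (D : Type*) := Option D

instance (D : Type*) : TopologicalSpace (Lind D) where
  IsOpen s := (none : Option D) ∈ s → sᶜ.Countable
  isOpen_univ := fun _ => by simp
  isOpen_inter := fun s t hs ht h => by
    rw [Set.compl_inter]; exact (hs h.1).union (ht h.2)
  isOpen_sUnion := fun S hS h => by
    obtain ⟨s, hsS, hns⟩ := h
    exact ((hS s hsS) hns).mono (Set.compl_subset_compl.mpr (Set.subset_sUnion_of_mem hsS))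



open Classical in
noncomputable def pickAt {X : Type*} (U : Set (Set X)) (x : X) : Set X :=
  if h : ∃ s ∈ U, x ∈ s then h.choose else ∅

lemma pickAt_spec {X : Type*} {U : Set (Set X)} (hU : ⋃₀ U = Set.univ) (x : X) :
    pickAt U x ∈ U ∧ x ∈ pickAt U x := by
  have hx : x ∈ ⋃₀ U := hU ▸ Set.mem_univ x
  obtain ⟨s, hs, hxs⟩ := hx
  have h : ∃ s ∈ U, x ∈ s := ⟨s, hs, hxs⟩
  classical rw [pickAt, dif_pos h]
  exact ⟨h.choose_spec.1, h.choose_spec.2⟩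

open Classical in
noncomputable def enumC {X : Type*} (x₀ : X) (c : Set X) : ℕ → X :=
  if h : c.Countable ∧ c.Nonempty then (Set.Countable.exists_eq_range h.1 h.2).choose
  else fun _ => x₀

lemma enumC_spec {X : Type*} (x₀ : X) {c : Set X} (hc : c.Countable) (hne : c.Nonempty) :
    c = Set.range (enumC x₀ c) := by
  classical rw [enumC, dif_pos ⟨hc, hne⟩]
  exact (Set.Countable.exists_eq_range hc hne).choose_spec

noncomputable def strat (D : Type*) (n : ℕ) (V : Fin (n + 1) → Set (Set (Lind D))) :
    Set (Set (Lind D)) :=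
  insert (pickAt (V (Fin.last n)) (none : Lind D))
    ((fun i => pickAt (V (Fin.last n))
        (enumC (none : Lind D) (pickAt (V 0) (none : Lind D))ᶜ i)) '' (Set.Iic n))

theorem stmt16 (D : Type*) (hD : ¬ Countable D) :
    ∃ σ : (n : ℕ) → (Fin (n + 1) → Set (Set (Lind D))) → Set (Set (Lind D)),
      ∀ U : ℕ → Set (Set (Lind D)),
        (∀ n, (∀ s ∈ U n, IsOpen s) ∧ ⋃₀ U n = Set.univ) →
        (∀ n, σ n (fun k => U k) ⊆ U n ∧ (σ n (fun k => U k)).Finite) ∧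
          ⋃₀ (⋃ n, σ n (fun k => U k)) = Set.univ := by
  refine ⟨strat D, fun U hU => ?_⟩
  set S : Set (Lind D) := pickAt (U 0) (none : Lind D) with hS
  set e : ℕ → Lind D := enumC (none : Lind D) Sᶜ with he
  have hpick : ∀ n x, pickAt (U n) x ∈ U n ∧ x ∈ pickAt (U n) x :=
    fun n x => pickAt_spec (hU n).2 x
  have hstrat : ∀ n, strat D n (fun k => U k) =
      insert (pickAt (U n) (none : Lind D))
        ((fun i => pickAt (U n) (e i)) '' (Set.Iic n)) := by
    intro n
    simp only [strat, Fin.val_last, Fin.val_zero, hS, he]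
  constructor
  · intro n
    rw [hstrat n]
    constructor
    · rintro s (rfl | ⟨i, _, rfl⟩)
      · exact (hpick n none).1
      · exact (hpick n _).1
    · exact ((Set.finite_Iic n).image _).insert _
  · apply Set.eq_univ_of_forall
    intro x
    by_cases hx : x ∈ S
    · refine ⟨pickAt (U 0) (none : Lind D), ?_, hx⟩
      exact Set.mem_iUnion.2 ⟨0, by rw [hstrat 0]; exact Set.mem_insert _ _⟩
    · -- x ∈ Sᶜ, which is countable and nonempty
      have hSopen : IsOpen S := (hU 0).1 S (hpick 0 none).1
      have hScnt : Sᶜ.Countable := hSopen (hpick 0 none).2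
      have hne : Sᶜ.Nonempty := ⟨x, hx⟩
      have := enumC_spec (none : Lind D) hScnt hne
      have hxr : x ∈ Set.range e := by have h2 : x ∈ Sᶜ := hx; rw [this] at h2; exact h2
      obtain ⟨i, hi⟩ := hxr
      refine ⟨pickAt (U i) (e i), ?_, hi ▸ (hpick i (e i)).2⟩
      exact Set.mem_iUnion.2 ⟨i, by
        rw [hstrat i]
        exact Set.mem_insert_iff.2 (Or.inr ⟨i, Set.self_mem_Iic, rfl⟩)⟩
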